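/- The relaxed dual value equals the system dual value: W_dr = W_ds. In particular, for every fixed λ ∈ ℝ_+^{m×k} and every z ∈ ℝ^{n×k} with z_i(l) ≥ z_i(l+1) for all i, l, the supremum over doubly stochastic profiles (M_i) ∈ Ω_k^n of U(z) + Σ_j λ_j^T(c_j𝟙 − Σ_{i∈R_j} M_i z_i) is attained at a profile of permutation matrices. -/
import Mathlib


open Finset

noncomputable section

/-- `nxt z l` is `z (l+1)`, with the convention `z (k+1) = 0`. -/
def nxt {k : ℕ} (z : Fin k → ℝ) (l : Fin k) : ℝ :=
  if h : (l : ℕ) + 1 < k then z ⟨(l : ℕ) + 1, h⟩ else 0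

/-- `z` is an ordered allocation: `z i l ≥ z i (l+1)` for all `i, l` (with `z i (k+1) = 0`). -/
def OrdAlloc {n k : ℕ} (z : Fin n → Fin k → ℝ) : Prop := ∀ i l, nxt (z i) l ≤ z i l

/-- Doubly stochastic `k × k` matrix. -/
def DS {k : ℕ} (M : Fin k → Fin k → ℝ) : Prop :=
  (∀ s t, 0 ≤ M s t) ∧ (∀ s, ∑ t, M s t = 1) ∧ (∀ t, ∑ s, M s t = 1)

/-- The permutation matrix of `π`. -/
def permMat {k : ℕ} (π : Equiv.Perm (Fin k)) : Fin k → Fin k → ℝ :=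
  fun s t => if π s = t then 1 else 0

/-- Aggregate utility `U(z) = ∑ i, ∑ l, h i l * v i (z i l)`. -/
def U {n k : ℕ} (h : Fin n → Fin k → ℝ) (v : Fin n → ℝ → ℝ)
    (z : Fin n → Fin k → ℝ) : ℝ :=
  ∑ i, ∑ l, h i l * v i (z i l)

/-- Lagrangian of the system problem. -/
def ThS {n m k : ℕ} (h : Fin n → Fin k → ℝ) (v : Fin n → ℝ → ℝ)
    (c : Fin m → ℝ) (J : Fin n → Finset (Fin m))
    (π : Fin n → Equiv.Perm (Fin k)) (z : Fin n → Fin k → ℝ)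
    (lam : Fin m → Fin k → ℝ) : ℝ :=
  U h v z + ∑ j, ∑ l, lam j l * (c j - ∑ i ∈ univ.filter (fun i => j ∈ J i), z i (π i l))

/-- Lagrangian of the relaxed system problem (doubly stochastic matrices). -/
def ThR {n m k : ℕ} (h : Fin n → Fin k → ℝ) (v : Fin n → ℝ → ℝ)
    (c : Fin m → ℝ) (J : Fin n → Finset (Fin m))
    (M : Fin n → Fin k → Fin k → ℝ) (z : Fin n → Fin k → ℝ)
    (lam : Fin m → Fin k → ℝ) : ℝ :=
  U h v z + ∑ j, ∑ l, lam j l *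
    (c j - ∑ i ∈ univ.filter (fun i => j ∈ J i), ∑ t, M i l t * z i t)

/-- Lagrangian of the average system problem. -/
def ThA {n m k : ℕ} (h : Fin n → Fin k → ℝ) (v : Fin n → ℝ → ℝ)
    (c : Fin m → ℝ) (J : Fin n → Finset (Fin m))
    (z : Fin n → Fin k → ℝ) (lamb : Fin m → ℝ) : ℝ :=
  U h v z + ∑ j, lamb j *
    (c j - ∑ i ∈ univ.filter (fun i => j ∈ J i), (1 / (k : ℝ)) * ∑ l, z i l)

/-- Primal system value `W_ps` (sup-inf). -/
def Wps (n m k : ℕ) (h : Fin n → Fin k → ℝ) (v : Fin n → ℝ → ℝ)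
    (c : Fin m → ℝ) (J : Fin n → Finset (Fin m)) : EReal :=
  ⨆ π : Fin n → Equiv.Perm (Fin k), ⨆ z : Fin n → Fin k → ℝ, ⨆ _ : OrdAlloc z,
    ⨅ lam : Fin m → Fin k → ℝ, ⨅ _ : ∀ j l, 0 ≤ lam j l, (ThS h v c J π z lam : EReal)

/-- Dual system value `W_ds` (inf-sup). -/
def Wds (n m k : ℕ) (h : Fin n → Fin k → ℝ) (v : Fin n → ℝ → ℝ)
    (c : Fin m → ℝ) (J : Fin n → Finset (Fin m)) : EReal :=
  ⨅ lam : Fin m → Fin k → ℝ, ⨅ _ : ∀ j l, 0 ≤ lam j l,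
    ⨆ π : Fin n → Equiv.Perm (Fin k), ⨆ z : Fin n → Fin k → ℝ, ⨆ _ : OrdAlloc z,
      (ThS h v c J π z lam : EReal)

/-- Relaxed primal value `W_pr` (sup-inf). -/
def Wpr (n m k : ℕ) (h : Fin n → Fin k → ℝ) (v : Fin n → ℝ → ℝ)
    (c : Fin m → ℝ) (J : Fin n → Finset (Fin m)) : EReal :=
  ⨆ M : Fin n → Fin k → Fin k → ℝ, ⨆ _ : ∀ i, DS (M i),
    ⨆ z : Fin n → Fin k → ℝ, ⨆ _ : OrdAlloc z,
      ⨅ lam : Fin m → Fin k → ℝ, ⨅ _ : ∀ j l, 0 ≤ lam j l, (ThR h v c J M z lam : EReal)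

/-- Relaxed dual value `W_dr` (inf-sup). -/
def Wdr (n m k : ℕ) (h : Fin n → Fin k → ℝ) (v : Fin n → ℝ → ℝ)
    (c : Fin m → ℝ) (J : Fin n → Finset (Fin m)) : EReal :=
  ⨅ lam : Fin m → Fin k → ℝ, ⨅ _ : ∀ j l, 0 ≤ lam j l,
    ⨆ M : Fin n → Fin k → Fin k → ℝ, ⨆ _ : ∀ i, DS (M i),
      ⨆ z : Fin n → Fin k → ℝ, ⨆ _ : OrdAlloc z, (ThR h v c J M z lam : EReal)

/-- Average primal value `W_pa` (sup-inf). -/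
def Wpa (n m k : ℕ) (h : Fin n → Fin k → ℝ) (v : Fin n → ℝ → ℝ)
    (c : Fin m → ℝ) (J : Fin n → Finset (Fin m)) : EReal :=
  ⨆ z : Fin n → Fin k → ℝ, ⨆ _ : OrdAlloc z,
    ⨅ lamb : Fin m → ℝ, ⨅ _ : ∀ j, 0 ≤ lamb j, (ThA h v c J z lamb : EReal)

/-- Average dual value `W_da` (inf-sup). -/
def Wda (n m k : ℕ) (h : Fin n → Fin k → ℝ) (v : Fin n → ℝ → ℝ)
    (c : Fin m → ℝ) (J : Fin n → Finset (Fin m)) : EReal :=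
  ⨅ lamb : Fin m → ℝ, ⨅ _ : ∀ j, 0 ≤ lamb j,
    ⨆ z : Fin n → Fin k → ℝ, ⨆ _ : OrdAlloc z, (ThA h v c J z lamb : EReal)


lemma DS_permMat {k : ℕ} (σ : Equiv.Perm (Fin k)) : DS (permMat σ) := by
  refine ⟨fun s t => by unfold permMat; positivity, fun s => by simp [permMat], fun t => ?_⟩
  simp [permMat, eq_comm (a := t), ← Equiv.eq_symm_apply]

lemma birkhoff_min {k : ℕ} (A : Fin k → Fin k → ℝ) (M : Fin k → Fin k → ℝ) (hM : DS M)
    (π : Equiv.Perm (Fin k))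
    (hπ : ∀ σ : Equiv.Perm (Fin k), ∑ l, A l (π l) ≤ ∑ l, A l (σ l)) :
    ∑ l, A l (π l) ≤ ∑ l, ∑ t, A l t * M l t := by
  have hM' : (Matrix.of M) ∈ doublyStochastic ℝ (Fin k) := by
    rw [mem_doublyStochastic_iff_sum]
    exact ⟨hM.1, hM.2.1, hM.2.2⟩
  obtain ⟨w, hw0, hw1, hw2⟩ := exists_eq_sum_perm_of_mem_doublyStochastic hM'
  have hent : ∀ l t, M l t = ∑ σ : Equiv.Perm (Fin k), (if σ l = t then w σ else 0) := by
    intro l t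
    have := congrFun (congrFun hw2 l) t
    simpa [Equiv.Perm.permMatrix, PEquiv.toMatrix_apply, Equiv.toPEquiv_apply,
      Matrix.sum_apply, Matrix.smul_apply, mul_ite] using this.symm
  have key : ∑ l, ∑ t, A l t * M l t = ∑ σ : Equiv.Perm (Fin k), w σ * ∑ l, A l (σ l) := by
    calc ∑ l, ∑ t, A l t * M l t
        = ∑ l, ∑ σ : Equiv.Perm (Fin k), w σ * A l (σ l) := by
          refine Finset.sum_congr rfl fun l _ => ?_
          simp_rw [hent, Finset.mul_sum, mul_ite, mul_zero]
          rw [Finset.sum_comm]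
          refine Finset.sum_congr rfl fun σ _ => ?_
          simp [Finset.sum_ite_eq, mul_comm]
      _ = ∑ σ : Equiv.Perm (Fin k), ∑ l, w σ * A l (σ l) := Finset.sum_comm
      _ = ∑ σ : Equiv.Perm (Fin k), w σ * ∑ l, A l (σ l) := by simp_rw [Finset.mul_sum]
  rw [key]
  calc ∑ l, A l (π l) = ∑ σ : Equiv.Perm (Fin k), w σ * ∑ l, A l (π l) := by
        rw [← Finset.sum_mul, hw1, one_mul]
    _ ≤ ∑ σ : Equiv.Perm (Fin k), w σ * ∑ l, A l (σ l) :=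
        Finset.sum_le_sum fun σ _ => mul_le_mul_of_nonneg_left (hπ σ) (hw0 σ)

lemma lag_swap {n m k : ℕ} (lam : Fin m → Fin k → ℝ) (c : Fin m → ℝ)
    (J : Fin n → Finset (Fin m)) (w : Fin n → Fin k → ℝ) :
    ∑ j, ∑ l, lam j l * (c j - ∑ i ∈ univ.filter (fun i => j ∈ J i), w i l)
      = (∑ j, ∑ l, lam j l * c j) - ∑ i, ∑ l, (∑ j ∈ J i, lam j l) * w i l := by
  simp_rw [mul_sub, Finset.sum_sub_distrib]
  congr 1
  calc ∑ j, ∑ l, lam j l * ∑ i ∈ univ.filter (fun i => j ∈ J i), w i l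
      = ∑ j, ∑ i ∈ univ.filter (fun i => j ∈ J i), ∑ l, lam j l * w i l := by
        refine Finset.sum_congr rfl fun j _ => ?_
        simp_rw [Finset.mul_sum]
        exact Finset.sum_comm
    _ = ∑ j, ∑ i, if j ∈ J i then ∑ l, lam j l * w i l else 0 := by
        refine Finset.sum_congr rfl fun j _ => ?_
        rw [Finset.sum_filter]
    _ = ∑ i, ∑ j, if j ∈ J i then ∑ l, lam j l * w i l else 0 := Finset.sum_comm
    _ = ∑ i, ∑ j ∈ J i, ∑ l, lam j l * w i l := by
        refine Finset.sum_congr rfl fun i _ => ?_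
        rw [Finset.sum_ite_mem, Finset.univ_inter]
    _ = ∑ i, ∑ l, (∑ j ∈ J i, lam j l) * w i l := by
        refine Finset.sum_congr rfl fun i _ => ?_
        rw [Finset.sum_comm]
        simp_rw [Finset.sum_mul]

lemma ThR_decomp {n m k : ℕ} (h : Fin n → Fin k → ℝ) (v : Fin n → ℝ → ℝ)
    (c : Fin m → ℝ) (J : Fin n → Finset (Fin m))
    (M : Fin n → Fin k → Fin k → ℝ) (z : Fin n → Fin k → ℝ)
    (lam : Fin m → Fin k → ℝ) :
    ThR h v c J M z lam = U h v z + (∑ j, ∑ l, lam j l * c j)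
      - ∑ i, ∑ l, ∑ t, ((∑ j ∈ J i, lam j l) * z i t) * M i l t := by
  unfold ThR
  rw [lag_swap lam c J (fun i l => ∑ t, M i l t * z i t)]
  rw [add_sub_assoc]
  congr 2
  refine Finset.sum_congr rfl fun i _ => Finset.sum_congr rfl fun l _ => ?_
  rw [Finset.mul_sum]
  refine Finset.sum_congr rfl fun t _ => by ring

lemma ThS_eq_ThR {n m k : ℕ} (h : Fin n → Fin k → ℝ) (v : Fin n → ℝ → ℝ)
    (c : Fin m → ℝ) (J : Fin n → Finset (Fin m))
    (π : Fin n → Equiv.Perm (Fin k)) (z : Fin n → Fin k → ℝ)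
    (lam : Fin m → Fin k → ℝ) :
    ThS h v c J π z lam = ThR h v c J (fun i => permMat (π i)) z lam := by
  unfold ThS ThR
  congr 1
  refine Finset.sum_congr rfl fun j _ => Finset.sum_congr rfl fun l _ => ?_
  congr 1
  congr 1
  refine Finset.sum_congr rfl fun i _ => ?_
  simp [permMat, ite_mul, Finset.sum_ite_eq]

lemma exists_opt_perm {n m k : ℕ} (h : Fin n → Fin k → ℝ) (v : Fin n → ℝ → ℝ)
    (c : Fin m → ℝ) (J : Fin n → Finset (Fin m))
    (z : Fin n → Fin k → ℝ) (lam : Fin m → Fin k → ℝ) :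
    ∃ π : Fin n → Equiv.Perm (Fin k),
      ∀ M : Fin n → Fin k → Fin k → ℝ, (∀ i, DS (M i)) →
        ThR h v c J M z lam ≤ ThR h v c J (fun i => permMat (π i)) z lam := by
  set A : Fin n → Fin k → Fin k → ℝ := fun i l t => (∑ j ∈ J i, lam j l) * z i t with hA
  have hex : ∀ i : Fin n, ∃ σ : Equiv.Perm (Fin k),
      ∀ τ : Equiv.Perm (Fin k), ∑ l, A i l (σ l) ≤ ∑ l, A i l (τ l) := by
    intro i
    obtain ⟨σ, -, hσ⟩ := Finset.exists_min_image Finset.univ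
      (fun σ : Equiv.Perm (Fin k) => ∑ l, A i l (σ l)) ⟨1, Finset.mem_univ 1⟩
    exact ⟨σ, fun τ => hσ τ (Finset.mem_univ τ)⟩
  choose π hπ using hex
  refine ⟨π, fun M hM => ?_⟩
  rw [ThR_decomp, ThR_decomp]
  have hperm : ∀ i, ∑ l, ∑ t, A i l t * permMat (π i) l t = ∑ l, A i l (π i l) := by
    intro i
    refine Finset.sum_congr rfl fun l _ => ?_
    simp [permMat, mul_ite, Finset.sum_ite_eq]
  refine sub_le_sub_left (Finset.sum_le_sum fun i _ => ?_) _
  rw [hperm i]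
  exact birkhoff_min (A i) (M i) (hM i) (π i) (hπ i)

lemma inner_sup_eq {n m k : ℕ} (h : Fin n → Fin k → ℝ) (v : Fin n → ℝ → ℝ)
    (c : Fin m → ℝ) (J : Fin n → Finset (Fin m)) (lam : Fin m → Fin k → ℝ) :
    (⨆ M : Fin n → Fin k → Fin k → ℝ, ⨆ _ : ∀ i, DS (M i),
      ⨆ z : Fin n → Fin k → ℝ, ⨆ _ : OrdAlloc z, (ThR h v c J M z lam : EReal))
    = ⨆ π : Fin n → Equiv.Perm (Fin k), ⨆ z : Fin n → Fin k → ℝ, ⨆ _ : OrdAlloc z,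
        (ThS h v c J π z lam : EReal) := by
  apply le_antisymm
  · refine iSup_le fun M => iSup_le fun hM => iSup_le fun z => iSup_le fun hz => ?_
    obtain ⟨π, hπ⟩ := exists_opt_perm h v c J z lam
    refine le_trans ?_ (le_iSup_of_le π (le_iSup_of_le z (le_iSup_of_le hz le_rfl)))
    rw [ThS_eq_ThR]
    exact EReal.coe_le_coe_iff.mpr (hπ M hM)
  · refine iSup_le fun π => iSup_le fun z => iSup_le fun hz => ?_
    refine le_trans ?_ (le_iSup_of_le (fun i => permMat (π i))
      (le_iSup_of_le (fun i => DS_permMat (π i)) (le_iSup_of_le z (le_iSup_of_le hz le_rfl))))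
    rw [ThS_eq_ThR]

/-- The relaxed dual value equals the system dual value: `W_dr = W_ds`.
In particular, for every fixed `λ ≥ 0` and ordered `z`, the supremum over doubly
stochastic profiles `(M i)` of the relaxed Lagrangian is attained at a profile of
permutation matrices. -/
theorem stmt12 (n m k : ℕ) (hk : 1 ≤ k)
    (c : Fin m → ℝ) (hc : ∀ j, 0 < c j)
    (J : Fin n → Finset (Fin m)) (hJ : ∀ i, (J i).Nonempty)
    (v : Fin n → ℝ → ℝ)
    (hvc : ∀ i, ContinuousOn (v i) (Set.Ici 0))
    (hvd : ∀ i, DifferentiableOn ℝ (v i) (Set.Ici 0))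
    (hvcc : ∀ i, ConcaveOn ℝ (Set.Ici 0) (v i))
    (hvm : ∀ i, StrictMonoOn (v i) (Set.Ici 0))
    (hvnn : ∀ i, ∀ x ∈ Set.Ici (0 : ℝ), 0 ≤ v i x)
    (h : Fin n → Fin k → ℝ) (hh : ∀ i l, 0 < h i l) :
    Wdr n m k h v c J = Wds n m k h v c J ∧
    ∀ lam : Fin m → Fin k → ℝ, (∀ j l, 0 ≤ lam j l) →
      ∀ z : Fin n → Fin k → ℝ, OrdAlloc z →
        ∃ π : Fin n → Equiv.Perm (Fin k),
          ∀ M : Fin n → Fin k → Fin k → ℝ, (∀ i, DS (M i)) →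
            ThR h v c J M z lam ≤ ThR h v c J (fun i => permMat (π i)) z lam := by
  constructor
  · unfold Wdr Wds
    exact iInf_congr fun lam => iInf_congr fun _ => inner_sup_eq h v c J lam
  · intro lam _ z _
    exact exists_opt_perm h v c J z lam
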